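/- Let N ≥ 2. The average of the gate-typicality g_t(U) over U drawn from the Haar probability measure on the unitary group U(N²) (acting on ℂ^N ⊗ ℂ^N) equals 1. -/

import Mathlib

open Matrix MeasureTheory
open scoped Kronecker

noncomputable section

instance {m n R : Type*} [TopologicalSpace R] : MeasurableSpace (Matrix m n R) := borel _
instance {m n R : Type*} [TopologicalSpace R] : BorelSpace (Matrix m n R) := ⟨rfl⟩

/-- Reshuffling: `(U_R)_{(i,j),(α,β)} = U_{(i,α),(j,β)}`. -/
def reshuffle (N : ℕ) (U : Matrix (Fin N × Fin N) (Fin N × Fin N) ℂ) :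
    Matrix (Fin N × Fin N) (Fin N × Fin N) ℂ :=
  Matrix.of fun p q => U (p.1, q.1) (p.2, q.2)

/-- Partial transpose: `(U_Γ)_{(j,α),(i,β)} = U_{(i,α),(j,β)}`. -/
def ptransp (N : ℕ) (U : Matrix (Fin N × Fin N) (Fin N × Fin N) ℂ) :
    Matrix (Fin N × Fin N) (Fin N × Fin N) ℂ :=
  Matrix.of fun p q => U (q.1, p.2) (p.1, q.2)

/-- The swap gate `S(x ⊗ y) = y ⊗ x`. -/
def swapGate (N : ℕ) : Matrix (Fin N × Fin N) (Fin N × Fin N) ℂ :=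
  Matrix.of fun p q => if p.1 = q.2 ∧ p.2 = q.1 then 1 else 0

/-- `ρ_R(U) = U_R U_R† / N²`. -/
def rhoR (N : ℕ) (U : Matrix (Fin N × Fin N) (Fin N × Fin N) ℂ) :
    Matrix (Fin N × Fin N) (Fin N × Fin N) ℂ :=
  ((N : ℂ) ^ 2)⁻¹ • (reshuffle N U * (reshuffle N U)ᴴ)

/-- `ρ_T(U) = S U_Γ U_Γ† S / N²`. -/
def rhoT (N : ℕ) (U : Matrix (Fin N × Fin N) (Fin N × Fin N) ℂ) :
    Matrix (Fin N × Fin N) (Fin N × Fin N) ℂ :=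
  ((N : ℂ) ^ 2)⁻¹ • (swapGate N * (ptransp N U * (ptransp N U)ᴴ) * swapGate N)

/-- Purity `X(U) = tr(ρ_R(U)²)` (a real number). -/
def Xpur (N : ℕ) (U : Matrix (Fin N × Fin N) (Fin N × Fin N) ℂ) : ℝ :=
  ((rhoR N U * rhoR N U).trace).re

/-- Purity `Y(U) = tr(ρ_T(U)²)` (a real number). -/
def Ypur (N : ℕ) (U : Matrix (Fin N × Fin N) (Fin N × Fin N) ℂ) : ℝ :=
  ((rhoT N U * rhoT N U).trace).re

/-- Entangling power `e_p(U)`. -/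
def ep (N : ℕ) (U : Matrix (Fin N × Fin N) (Fin N × Fin N) ℂ) : ℝ :=
  ((N : ℝ) ^ 2 / ((N : ℝ) + 1) ^ 2) *
    ((1 - Xpur N U) + (1 - Ypur N U) - ((N : ℝ) ^ 2 - 1) / (N : ℝ) ^ 2)

/-- Gate typicality `g_t(U)`. -/
def gateTyp (N : ℕ) (U : Matrix (Fin N × Fin N) (Fin N × Fin N) ℂ) : ℝ :=
  ((N : ℝ) ^ 2 / ((N : ℝ) ^ 2 - 1)) *
    (Ypur N U - Xpur N U + ((N : ℝ) ^ 2 - 1) / (N : ℝ) ^ 2)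

/-- Mean entangling power over the Haar measure, `ē_p = (N-1)²/(N²+1)`. -/
def epBar (N : ℕ) : ℝ := ((N : ℝ) - 1) ^ 2 / ((N : ℝ) ^ 2 + 1)

/-- `iterGate U W k = U · W_{k-1} · U ⋯ W_0 · U`, i.e. `U^(k+1)` with `k` interlacing
local gates `W_0, …, W_{k-1}`. -/
def iterGate {D : Type*} [Fintype D] [DecidableEq D] (U : Matrix D D ℂ)
    (W : ℕ → Matrix D D ℂ) : ℕ → Matrix D D ℂ
  | 0 => U
  | k + 1 => U * W k * iterGate U W k

-- auxiliary lemmas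

lemma swap_mul_apply (N : ℕ) (M : Matrix (Fin N × Fin N) (Fin N × Fin N) ℂ)
    (p q : Fin N × Fin N) : (swapGate N * M) p q = M (p.2, p.1) q := by
  rw [Matrix.mul_apply]
  rw [Finset.sum_eq_single (p.2, p.1)]
  · simp [swapGate]
  · intro r _ hr
    have : ¬(p.1 = r.2 ∧ p.2 = r.1) := by
      rintro ⟨h1, h2⟩
      exact hr (by cases r; simp_all)
    simp [swapGate, this]
  · simp

lemma swap_conjT (N : ℕ) : (swapGate N)ᴴ = swapGate N := by
  ext p q
  simp only [conjTranspose_apply, swapGate, Matrix.of_apply]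
  have h : (q.1 = p.2 ∧ q.2 = p.1) ↔ (p.1 = q.2 ∧ p.2 = q.1) := by
    constructor <;> rintro ⟨a, b⟩ <;> exact ⟨b.symm, a.symm⟩
  rw [if_congr h rfl rfl]
  split <;> simp

lemma swap_mul_swap (N : ℕ) : swapGate N * swapGate N = 1 := by
  ext p q
  rw [swap_mul_apply]
  simp [swapGate, Matrix.one_apply, Prod.ext_iff, and_comm]

lemma ptransp_eq (N : ℕ) (U : Matrix (Fin N × Fin N) (Fin N × Fin N) ℂ) :
    ptransp N U = swapGate N * reshuffle N (swapGate N * U) := by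
  ext p q
  rw [swap_mul_apply]
  show U (q.1, p.2) (p.1, q.2) = reshuffle N (swapGate N * U) (p.2, p.1) q
  show _ = (swapGate N * U) (p.2, q.1) (p.1, q.2)
  rw [swap_mul_apply]

lemma rhoT_eq (N : ℕ) (U : Matrix (Fin N × Fin N) (Fin N × Fin N) ℂ) :
    rhoT N U = rhoR N (swapGate N * U) := by
  rw [rhoT, rhoR, ptransp_eq, conjTranspose_mul, swap_conjT]
  congr 1
  set R := reshuffle N (swapGate N * U)
  calc swapGate N * (swapGate N * R * (Rᴴ * swapGate N)) * swapGate N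
      = (swapGate N * swapGate N) * (R * Rᴴ) * (swapGate N * swapGate N) := by
        noncomm_ring
    _ = R * Rᴴ := by rw [swap_mul_swap]; simp

lemma Ypur_eq (N : ℕ) (U : Matrix (Fin N × Fin N) (Fin N × Fin N) ℂ) :
    Ypur N U = Xpur N (swapGate N * U) := by
  rw [Ypur, Xpur, rhoT_eq]

lemma swap_mem (N : ℕ) : swapGate N ∈ Matrix.unitaryGroup (Fin N × Fin N) ℂ := by
  rw [Matrix.mem_unitaryGroup_iff, Matrix.star_eq_conjTranspose, swap_conjT,
    swap_mul_swap]

lemma unitary_isCompact (N : ℕ) :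
    IsCompact (Matrix.unitaryGroup (Fin N × Fin N) ℂ :
      Set (Matrix (Fin N × Fin N) (Fin N × Fin N) ℂ)) := by
  set D := Fin N × Fin N
  have hK : IsCompact (Set.univ.pi fun _ : D =>
      Set.univ.pi fun _ : D => Metric.closedBall (0 : ℂ) 1) :=
    isCompact_univ_pi fun _ => isCompact_univ_pi fun _ => isCompact_closedBall _ _
  apply hK.of_isClosed_subset
  · have h1 : IsClosed {A : Matrix D D ℂ | star A * A = 1} :=
      isClosed_eq (Continuous.matrix_mul continuous_star continuous_id) continuous_const
    have h2 : IsClosed {A : Matrix D D ℂ | A * star A = 1} :=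
      isClosed_eq (Continuous.matrix_mul continuous_id continuous_star) continuous_const
    have : (Matrix.unitaryGroup D ℂ : Set (Matrix D D ℂ)) =
        {A : Matrix D D ℂ | star A * A = 1} ∩ {A : Matrix D D ℂ | A * star A = 1} := by
      ext A
      exact Iff.rfl
    rw [this]
    exact h1.inter h2
  · intro A hA
    rw [Set.mem_univ_pi]
    intro i
    rw [Set.mem_univ_pi]
    intro j
    rw [Metric.mem_closedBall, dist_zero_right]
    exact entry_norm_bound_of_unitary hA i j

instance (N : ℕ) : CompactSpace (Matrix.unitaryGroup (Fin N × Fin N) ℂ) :=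
  isCompact_iff_compactSpace.mp (unitary_isCompact N)

instance (N : ℕ) : BorelSpace (Matrix.unitaryGroup (Fin N × Fin N) ℂ) :=
  Subtype.borelSpace _

lemma cont_Xpur (N : ℕ) :
    Continuous fun U : Matrix (Fin N × Fin N) (Fin N × Fin N) ℂ => Xpur N U := by
  have hR : Continuous fun U : Matrix (Fin N × Fin N) (Fin N × Fin N) ℂ =>
      reshuffle N U := by
    apply continuous_matrix
    intro i j
    exact continuous_id.matrix_elem _ _
  have h1 : Continuous fun U : Matrix (Fin N × Fin N) (Fin N × Fin N) ℂ =>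
      rhoR N U := by
    have := (hR.matrix_mul hR.matrix_conjTranspose).const_smul ((N : ℂ) ^ 2)⁻¹
    exact this
  exact Complex.continuous_re.comp ((h1.matrix_mul h1).matrix_trace)

/-- The Haar average of the gate-typicality over `U(N²)` equals `1`. -/
theorem gate_typicality_haar_average (N : ℕ) (hN : 2 ≤ N)
    (μ : Measure (Matrix.unitaryGroup (Fin N × Fin N) ℂ)) [μ.IsHaarMeasure]
    [IsProbabilityMeasure μ] :
    (∫ u : Matrix.unitaryGroup (Fin N × Fin N) ℂ,
        gateTyp N (u : Matrix (Fin N × Fin N) (Fin N × Fin N) ℂ) ∂μ) = 1 := by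
  have hN0 : (N : ℝ) ^ 2 - 1 ≠ 0 := by
    have : (2 : ℝ) ≤ (N : ℝ) := by exact_mod_cast hN
    nlinarith
  have hN1 : (N : ℝ) ^ 2 ≠ 0 := by positivity
  set c : ℝ := (N : ℝ) ^ 2 / ((N : ℝ) ^ 2 - 1) with hc
  have hc1 : c * (((N : ℝ) ^ 2 - 1) / (N : ℝ) ^ 2) = 1 := by
    rw [hc, div_mul_div_comm, mul_comm ((N : ℝ) ^ 2), div_self (mul_ne_zero hN0 hN1)]
  -- continuity / integrability
  have hcoe : Continuous fun u : Matrix.unitaryGroup (Fin N × Fin N) ℂ =>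
      (u : Matrix (Fin N × Fin N) (Fin N × Fin N) ℂ) := continuous_subtype_val
  have hXc : Continuous fun u : Matrix.unitaryGroup (Fin N × Fin N) ℂ =>
      Xpur N (u : Matrix (Fin N × Fin N) (Fin N × Fin N) ℂ) := (cont_Xpur N).comp hcoe
  have hX : Integrable (fun u : Matrix.unitaryGroup (Fin N × Fin N) ℂ =>
      Xpur N (u : Matrix (Fin N × Fin N) (Fin N × Fin N) ℂ)) μ :=
    hXc.integrable_of_hasCompactSupport (HasCompactSupport.of_compactSpace _)
  -- swap element of the unitary group
  set s : Matrix.unitaryGroup (Fin N × Fin N) ℂ := ⟨swapGate N, swap_mem N⟩ with hs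
  have hYX : ∀ u : Matrix.unitaryGroup (Fin N × Fin N) ℂ,
      Ypur N (u : Matrix (Fin N × Fin N) (Fin N × Fin N) ℂ) =
        Xpur N ((s * u : Matrix.unitaryGroup (Fin N × Fin N) ℂ) :
          Matrix (Fin N × Fin N) (Fin N × Fin N) ℂ) := by
    intro u
    rw [Ypur_eq]
    rfl
  have hY : Integrable (fun u : Matrix.unitaryGroup (Fin N × Fin N) ℂ =>
      Ypur N (u : Matrix (Fin N × Fin N) (Fin N × Fin N) ℂ)) μ := by
    have hYc : Continuous fun u : Matrix.unitaryGroup (Fin N × Fin N) ℂ =>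
        Ypur N (u : Matrix (Fin N × Fin N) (Fin N × Fin N) ℂ) := by
      simp only [Ypur_eq]
      exact (cont_Xpur N).comp (continuous_const.matrix_mul hcoe)
    exact hYc.integrable_of_hasCompactSupport (HasCompactSupport.of_compactSpace _)
  have hint : (∫ u : Matrix.unitaryGroup (Fin N × Fin N) ℂ,
      Ypur N (u : Matrix (Fin N × Fin N) (Fin N × Fin N) ℂ) ∂μ) =
      ∫ u : Matrix.unitaryGroup (Fin N × Fin N) ℂ,
        Xpur N (u : Matrix (Fin N × Fin N) (Fin N × Fin N) ℂ) ∂μ := by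
    simp only [hYX]
    exact integral_mul_left_eq_self
      (fun u : Matrix.unitaryGroup (Fin N × Fin N) ℂ =>
        Xpur N (u : Matrix (Fin N × Fin N) (Fin N × Fin N) ℂ)) s
  have hexp : ∀ u : Matrix.unitaryGroup (Fin N × Fin N) ℂ,
      gateTyp N (u : Matrix (Fin N × Fin N) (Fin N × Fin N) ℂ) =
        c * Ypur N (u : Matrix (Fin N × Fin N) (Fin N × Fin N) ℂ) -
          c * Xpur N (u : Matrix (Fin N × Fin N) (Fin N × Fin N) ℂ) + 1 := by
    intro u
    rw [gateTyp, ← hc, mul_add, mul_sub, hc1]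
  calc (∫ u : Matrix.unitaryGroup (Fin N × Fin N) ℂ,
        gateTyp N (u : Matrix (Fin N × Fin N) (Fin N × Fin N) ℂ) ∂μ)
      = ∫ u : Matrix.unitaryGroup (Fin N × Fin N) ℂ,
          (c * Ypur N (u : Matrix (Fin N × Fin N) (Fin N × Fin N) ℂ) -
            c * Xpur N (u : Matrix (Fin N × Fin N) (Fin N × Fin N) ℂ) + 1) ∂μ := by
        simp only [hexp]
    _ = 1 := by
        have e1 := integral_add (μ := μ)
          ((hY.const_mul c).sub (hX.const_mul c)) (integrable_const (1 : ℝ))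
        have e2 := integral_sub (μ := μ) (hY.const_mul c) (hX.const_mul c)
        simp only [Pi.sub_apply] at e1
        rw [e1, e2, integral_const_mul, integral_const_mul, hint]
        simp
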